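/- If f: F₂ⁿ → F₂ has algebraic degree d ≥ 1, then there exist linearly independent a₁,…,a_d ∈ F₂ⁿ such that the d-th order derivative D_{a_d}…D_{a_1}f is the constant one function; consequently, the all-one vector of length 2ⁿ is a sum of 2^d translates of the support indicator of f, i.e. ⊕_{a ∈ span(a₁,…,a_d)} f(x + a) = 1 for all x. -/

import Mathlib

/-- First-order derivative of a Boolean function: `D_a f (x) = f (x + a) + f x`. -/
def bderiv {V : Type} [Add V] (f : V → ZMod 2) (a : V) : V → ZMod 2 :=
  fun x => f (x + a) + f x

/-- The algebraic degree of a Boolean function: the minimal total degree of a polynomial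
representing it (this equals the degree of its algebraic normal form). -/
noncomputable def bdeg {σ : Type} (f : (σ → ZMod 2) → ZMod 2) : ℕ :=
  sInf { d | ∃ p : MvPolynomial σ (ZMod 2),
    (∀ x, MvPolynomial.eval x p = f x) ∧ p.totalDegree = d }

open MvPolynomial Finset

lemma z2_pow (x : ZMod 2) (k : ℕ) (hk : k ≠ 0) : x ^ k = x := by
  fin_cases x
  · show (0 : ZMod 2) ^ k = 0; exact zero_pow hk
  · show (1 : ZMod 2) ^ k = 1; exact one_pow k

lemma z2_ne_zero (a : ZMod 2) (h : a ≠ 0) : a = 1 := by revert h; revert a; decide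

lemma z2_sum {M : Type*} [AddCommMonoid M] (g : ZMod 2 → M) :
    ∑ y : ZMod 2, g y = g 0 + g 1 := by
  have h : (Finset.univ : Finset (ZMod 2)) = {0, 1} := by decide
  rw [h, Finset.sum_pair (by decide)]

lemma z2_pair_pow (x : ZMod 2) (k : ℕ) :
    (x + 0) ^ k + (x + 1) ^ k = if k = 0 then 0 else 1 := by
  by_cases hk : k = 0
  · subst hk; simp; decide
  · rw [if_neg hk, z2_pow _ _ hk, z2_pow _ _ hk]
    revert x; decide

lemma rep_exists {n : ℕ} (f : (Fin n → ZMod 2) → ZMod 2) :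
    ∃ p : MvPolynomial (Fin n) (ZMod 2), ∀ x, MvPolynomial.eval x p = f x := by
  refine ⟨∑ y : Fin n → ZMod 2, C (f y) * ∏ i, (X i + C (y i) + 1), fun x => ?_⟩
  rw [map_sum]
  rw [Finset.sum_eq_single_of_mem x (Finset.mem_univ x)]
  · simp only [map_mul, eval_C, map_prod, map_add, eval_X, map_one]
    have : ∀ i : Fin n, x i + x i + 1 = 1 := by intro i; revert x; intro x; generalize x i = a; revert a; decide
    simp [this]
  · intro y _ hyx
    obtain ⟨i, hi⟩ := Function.ne_iff.1 (Ne.symm hyx)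
    simp only [map_mul, eval_C, map_prod, map_add, eval_X, map_one]
    rw [Finset.prod_eq_zero (Finset.mem_univ i)]
    · ring
    · have : ∀ a b : ZMod 2, a ≠ b → a + b + 1 = 0 := by decide
      exact this _ _ hi
noncomputable def mlred {n : ℕ} (p : MvPolynomial (Fin n) (ZMod 2)) :
    MvPolynomial (Fin n) (ZMod 2) :=
  ∑ m ∈ p.support, monomial (m.mapRange (fun k => min k 1) rfl) (coeff m p)

lemma red_support {n : ℕ} (m : Fin n →₀ ℕ) :
    (m.mapRange (fun k => min k 1) rfl).support = m.support := by
  ext i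
  simp only [Finsupp.mem_support_iff, Finsupp.mapRange_apply]
  omega

lemma mlred_eval {n : ℕ} (p : MvPolynomial (Fin n) (ZMod 2)) (x : Fin n → ZMod 2) :
    MvPolynomial.eval x (mlred p) = MvPolynomial.eval x p := by
  conv_rhs => rw [← support_sum_monomial_coeff p]
  rw [mlred, map_sum, map_sum]
  refine Finset.sum_congr rfl fun m _ => ?_
  rw [eval_monomial, eval_monomial]
  congr 1
  rw [Finsupp.prod, Finsupp.prod, red_support]
  refine Finset.prod_congr rfl fun i hi => ?_
  rw [Finsupp.mapRange_apply]
  have hmi : m i ≠ 0 := Finsupp.mem_support_iff.1 hi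
  rw [z2_pow _ _ (by omega), z2_pow _ _ hmi]

lemma mlred_totalDegree {n : ℕ} (p : MvPolynomial (Fin n) (ZMod 2)) :
    (mlred p).totalDegree ≤ p.totalDegree := by
  refine le_trans (totalDegree_finset_sum _ _) (Finset.sup_le fun m hm => ?_)
  refine le_trans (totalDegree_monomial_le _ _) ?_
  refine le_trans ?_ (le_totalDegree hm)
  rw [Finsupp.sum, Finsupp.sum, red_support]
  exact Finset.sum_le_sum fun i _ => by rw [Finsupp.mapRange_apply]; exact min_le_left _ _

lemma mlred_multilinear {n : ℕ} (p : MvPolynomial (Fin n) (ZMod 2)) :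
    ∀ m ∈ (mlred p).support, ∀ i, m i ≤ 1 := by
  intro m hm i
  have := MvPolynomial.support_sum hm
  obtain ⟨m', _, hm'⟩ := Finset.mem_biUnion.1 this
  have := support_monomial_subset hm'
  rw [Finset.mem_singleton] at this
  subst this
  rw [Finsupp.mapRange_apply]
  omega
lemma foldl_bderiv {n : ℕ} : ∀ (d : ℕ) (a : Fin d → (Fin n → ZMod 2))
    (f : (Fin n → ZMod 2) → ZMod 2) (x : Fin n → ZMod 2),
    (List.ofFn a).foldl bderiv f x
      = ∑ c : Fin d → ZMod 2, f (x + ∑ i, c i • a i) := by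
  intro d
  induction d with
  | zero =>
    intro a f x
    simp [List.ofFn_zero]
  | succ d ih =>
    intro a f x
    rw [List.ofFn_succ, List.foldl_cons, ih (fun i => a i.succ) (bderiv f (a 0)) x]
    rw [← (Fin.consEquiv (fun _ : Fin (d+1) => ZMod 2)).sum_comp]
    rw [Fintype.sum_prod_type, z2_sum]
    simp only [Fin.consEquiv_apply, Fin.sum_univ_succ, Fin.cons_zero, Fin.cons_succ,
      zero_smul, one_smul, zero_add]
    rw [← Finset.sum_add_distrib]
    refine Finset.sum_congr rfl fun c _ => ?_
    show f ((x + ∑ i, c i • a i.succ) + a 0) + f (x + ∑ i, c i • a i.succ) = _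
    rw [add_comm]
    congr 2
    abel
section Key
variable {n d : ℕ} (q : MvPolynomial (Fin n) (ZMod 2)) (m : Fin n →₀ ℕ)
  (e : Fin d → Fin n)

/-- basis-like vectors -/
def avec (e : Fin d → Fin n) (i : Fin d) : Fin n → ZMod 2 :=
  fun j => if j = e i then 1 else 0

lemma avec_sum_apply_e (he_inj : Function.Injective e) (c : Fin d → ZMod 2) (i₀ : Fin d) :
    (∑ i, c i • avec e i) (e i₀) = c i₀ := by
  rw [Finset.sum_apply]
  rw [Finset.sum_eq_single_of_mem i₀ (Finset.mem_univ _)]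
  · simp [avec]
  · intro i _ hi
    have : e i₀ ≠ e i := fun h => hi (he_inj h).symm
    simp [avec, this]

lemma avec_sum_apply_nmem (c : Fin d → ZMod 2) (j : Fin n)
    (hj : ∀ i, j ≠ e i) : (∑ i, c i • avec e i) j = 0 := by
  rw [Finset.sum_apply]
  refine Finset.sum_eq_zero fun i _ => ?_
  simp [avec, hj i]

lemma key_sum
    (hml : ∀ m' ∈ q.support, ∀ i, m' i ≤ 1)
    (hq : q.totalDegree = d)
    (hm : m ∈ q.support)
    (hmd : (m.sum fun _ k => k) = d)
    (he_inj : Function.Injective e)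
    (he_mem : ∀ i, e i ∈ m.support)
    (he_surj : ∀ j ∈ m.support, ∃ i, e i = j)
    (x : Fin n → ZMod 2) :
    ∑ c : Fin d → ZMod 2, MvPolynomial.eval (x + ∑ i, c i • avec e i) q = 1 := by
  classical
  -- m takes value 1 exactly on its support
  have hm1 : ∀ j ∈ m.support, m j = 1 := fun j hj => by
    have h1 := hml m hm j
    have h0 : m j ≠ 0 := Finsupp.mem_support_iff.1 hj
    omega
  have hcard : m.support.card = d := by
    rw [← hmd, Finsupp.sum]
    rw [Finset.sum_congr rfl hm1, Finset.sum_const, smul_eq_mul, mul_one]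
  -- step 1 : reindex the sum over c as a sum over u in piFinset
  set S : Fin n → Finset (ZMod 2) := fun j => if j ∈ m.support then Finset.univ else {0} with hS
  have step1 : ∑ c : Fin d → ZMod 2, MvPolynomial.eval (x + ∑ i, c i • avec e i) q
      = ∑ u ∈ Fintype.piFinset S, MvPolynomial.eval (x + u) q := by
    refine Finset.sum_nbij' (i := fun c => ∑ i, c i • avec e i)
      (j := fun u => fun i => u (e i)) ?_ ?_ ?_ ?_ ?_
    · intro c _
      rw [Fintype.mem_piFinset]
      intro j
      by_cases hj : j ∈ m.support
      · simp [hS, hm1 j hj]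
      · have : ∀ i, j ≠ e i := fun i h => hj (h ▸ he_mem i)
        simp [hS, Finsupp.notMem_support_iff.1 hj, avec_sum_apply_nmem e c j this]
    · intro u _; exact Finset.mem_univ _
    · intro c _
      funext i
      exact avec_sum_apply_e e he_inj c i
    · intro u hu
      show (∑ i, u (e i) • avec e i) = u
      funext j
      by_cases hj : j ∈ m.support
      · obtain ⟨i, rfl⟩ := he_surj j hj
        exact avec_sum_apply_e e he_inj _ i
      · have h1 : ∀ i, j ≠ e i := fun i h => hj (h ▸ he_mem i)
        rw [avec_sum_apply_nmem e _ j h1]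
        rw [Fintype.mem_piFinset] at hu
        have := hu j
        rw [hS] at this
        simp only [if_neg hj, Finset.mem_singleton] at this
        exact this.symm
    · intro c _; rfl
  rw [step1]
  -- step 2 : expand eval and swap sums
  have step2 : ∑ u ∈ Fintype.piFinset S, MvPolynomial.eval (x + u) q
      = ∑ m' ∈ q.support, coeff m' q *
          ∑ u ∈ Fintype.piFinset S, ∏ j, (x j + u j) ^ m' j := by
    have : ∀ u : Fin n → ZMod 2, MvPolynomial.eval (x + u) q
        = ∑ m' ∈ q.support, coeff m' q * ∏ j, (x j + u j) ^ m' j := by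
      intro u
      rw [eval_eq']
      exact Finset.sum_congr rfl fun m' _ => by simp [Pi.add_apply]
    rw [Finset.sum_congr rfl fun u _ => this u, Finset.sum_comm]
    exact Finset.sum_congr rfl fun m' _ => (Finset.mul_sum _ _ _).symm
  rw [step2]
  -- step 3 : factor the inner sum as a product
  have step3 : ∀ m' : Fin n →₀ ℕ,
      ∑ u ∈ Fintype.piFinset S, ∏ j, (x j + u j) ^ m' j
        = ∏ j, ∑ y ∈ S j, (x j + y) ^ m' j := by
    intro m'
    exact (Finset.prod_univ_sum S fun j y => (x j + y) ^ m' j).symm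
  -- step 4 : the factor values
  have step4 : ∀ (m' : Fin n →₀ ℕ) (j : Fin n),
      (∑ y ∈ S j, (x j + y) ^ m' j)
        = if j ∈ m.support then (if m' j = 0 then 0 else 1) else (x j) ^ m' j := by
    intro m' j
    by_cases hj : j ∈ m.support
    · simp only [hS, if_pos hj, ← z2_pair_pow (x j) (m' j)]
      rw [z2_sum fun y => (x j + y) ^ m' j]
    · simp only [hS, if_neg hj, Finset.sum_singleton, add_zero]
  -- evaluate the whole sum
  rw [Finset.sum_eq_single_of_mem m hm]
  · rw [step3, Finset.prod_congr rfl fun j _ => step4 m j]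
    have : ∀ j : Fin n, (if j ∈ m.support then (if m j = 0 then 0 else 1)
        else (x j) ^ m j) = 1 := by
      intro j
      by_cases hj : j ∈ m.support
      · simp [hj, Finsupp.mem_support_iff.1 hj]
      · simp [hj, Finsupp.notMem_support_iff.1 hj]
    rw [Finset.prod_congr rfl fun j _ => this j, Finset.prod_const_one, mul_one]
    have hc : coeff m q ≠ 0 := MvPolynomial.mem_support_iff.1 hm
    revert hc
    generalize coeff m q = co
    revert co
    decide
  · intro m' hm' hne
    rw [step3, Finset.prod_congr rfl fun j _ => step4 m' j]
    -- show there is j ∈ m.support with m' j = 0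
    have hexists : ∃ j ∈ m.support, m' j = 0 := by
      by_contra hcon
      push_neg at hcon
      have hsub : m.support ⊆ m'.support := fun j hj =>
        Finsupp.mem_support_iff.2 (hcon j hj)
      have h1 : d ≤ m'.support.card := hcard ▸ Finset.card_le_card hsub
      have h2 : m'.support.card ≤ m'.sum fun _ k => k := by
        rw [Finsupp.sum]
        calc m'.support.card = ∑ j ∈ m'.support, 1 := by simp
        _ ≤ ∑ j ∈ m'.support, m' j := Finset.sum_le_sum fun j hj =>
            Nat.one_le_iff_ne_zero.2 (Finsupp.mem_support_iff.1 hj)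
      have h3 : (m'.sum fun _ k => k) ≤ d := hq ▸ le_totalDegree hm'
      have hsupeq : m.support = m'.support :=
        Finset.eq_of_subset_of_card_le hsub (by omega)
      apply hne
      ext j
      by_cases hj : j ∈ m.support
      · have := hml m' hm' j
        have := hcon j hj
        have := hm1 j hj
        omega
      · rw [Finsupp.notMem_support_iff.1 hj,
          Finsupp.notMem_support_iff.1 (hsupeq ▸ hj)]
    obtain ⟨j, hj, hj0⟩ := hexists
    rw [Finset.prod_eq_zero (Finset.mem_univ j), mul_zero]
    rw [if_pos hj, if_pos hj0]

end Key

theorem stmt16 {n d : ℕ} (f : (Fin n → ZMod 2) → ZMod 2)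
    (hd : bdeg f = d) (h1 : 1 ≤ d) :
    ∃ a : Fin d → (Fin n → ZMod 2),
      LinearIndependent (ZMod 2) a
      ∧ (∀ x : Fin n → ZMod 2, (List.ofFn a).foldl bderiv f x = 1)
      ∧ (∀ x : Fin n → ZMod 2,
          ∑ᶠ v ∈ (↑(Submodule.span (ZMod 2) (Set.range a)) : Set (Fin n → ZMod 2)),
            f (x + v) = 1) := by
  classical
  -- obtain a minimal-degree representative
  obtain ⟨p₀, hp₀⟩ := rep_exists f
  have hne : { d | ∃ p : MvPolynomial (Fin n) (ZMod 2),
      (∀ x, MvPolynomial.eval x p = f x) ∧ p.totalDegree = d }.Nonempty :=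
    ⟨p₀.totalDegree, p₀, hp₀, rfl⟩
  have hmem := Nat.sInf_mem hne
  rw [show sInf _ = bdeg f from rfl, hd] at hmem
  obtain ⟨p, hp, hpd⟩ := hmem
  -- multilinearize
  set q := mlred p with hqdef
  have hfq : ∀ x, MvPolynomial.eval x q = f x := fun x => (mlred_eval p x).trans (hp x)
  have hq_le : q.totalDegree ≤ d := hpd ▸ mlred_totalDegree p
  have hq_ge : d ≤ q.totalDegree := by
    have : q.totalDegree ∈ { d | ∃ p : MvPolynomial (Fin n) (ZMod 2),
        (∀ x, MvPolynomial.eval x p = f x) ∧ p.totalDegree = d } := ⟨q, hfq, rfl⟩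
    have := Nat.sInf_le this
    rw [show sInf _ = bdeg f from rfl, hd] at this
    exact this
  have hqd : q.totalDegree = d := le_antisymm hq_le hq_ge
  have hml : ∀ m' ∈ q.support, ∀ i, m' i ≤ 1 := mlred_multilinear p
  -- extract a top monomial
  have hq0 : q.support.Nonempty := by
    by_contra h
    rw [Finset.not_nonempty_iff_eq_empty] at h
    have : q = 0 := MvPolynomial.support_eq_empty.1 h
    rw [this, totalDegree_zero] at hqd
    omega
  obtain ⟨m, hm, hms⟩ := Finset.exists_mem_eq_sup q.support hq0
    (fun s : Fin n →₀ ℕ => s.sum fun _ k => k)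
  have hmd : (m.sum fun _ k => k) = d := by
    rw [← hms, ← hqd]; rfl
  have hm1 : ∀ j ∈ m.support, m j = 1 := fun j hj => by
    have h1 := hml m hm j
    have h0 : m j ≠ 0 := Finsupp.mem_support_iff.1 hj
    omega
  have hcard : m.support.card = d := by
    rw [← hmd, Finsupp.sum]
    rw [Finset.sum_congr rfl hm1, Finset.sum_const, smul_eq_mul, mul_one]
  -- enumerate its support
  set iso := m.support.orderIsoOfFin hcard with hiso
  set e : Fin d → Fin n := fun i => (iso i : Fin n) with he
  have he_inj : Function.Injective e :=
    fun i i' h => iso.injective (Subtype.ext h)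
  have he_mem : ∀ i, e i ∈ m.support := fun i => (iso i).2
  have he_surj : ∀ j ∈ m.support, ∃ i, e i = j := fun j hj =>
    ⟨iso.symm ⟨j, hj⟩, by simp [he]⟩
  refine ⟨avec e, ?_, ?_, ?_⟩
  · -- linear independence
    rw [Fintype.linearIndependent_iff]
    intro g hg i
    have := congrFun hg (e i)
    rw [avec_sum_apply_e e he_inj g i] at this
    exact this
  · -- the iterated derivative is constant one
    intro x
    rw [foldl_bderiv d (avec e) f x]
    rw [Finset.sum_congr rfl fun c _ => (hfq (x + ∑ i, c i • avec e i)).symm]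
    exact key_sum q m e hml hqd hm hmd he_inj he_mem he_surj x
  · -- the coset sums
    intro x
    have hfin : (↑(Submodule.span (ZMod 2) (Set.range (avec e))) :
        Set (Fin n → ZMod 2)).Finite := Set.toFinite _
    rw [finsum_mem_eq_finite_toFinset_sum _ hfin]
    have himg : hfin.toFinset
        = Finset.image (fun c : Fin d → ZMod 2 => ∑ i, c i • avec e i) Finset.univ := by
      ext v
      simp only [Set.Finite.mem_toFinset, SetLike.mem_coe, Finset.mem_image,
        Finset.mem_univ, true_and]
      exact Submodule.mem_span_range_iff_exists_fun (ZMod 2)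
    rw [himg, Finset.sum_image ?hinj]
    case hinj =>
      intro c _ c' _ hcc
      funext i
      have := congrFun hcc (e i)
      beta_reduce at this
      rwa [avec_sum_apply_e e he_inj c i, avec_sum_apply_e e he_inj c' i] at this
    rw [Finset.sum_congr rfl fun c _ => (hfq (x + ∑ i, c i • avec e i)).symm]
    exact key_sum q m e hml hqd hm hmd he_inj he_mem he_surj x
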